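/- Let G ≤ O(m) be a finite group and suppose the finite weighted set (X,w) in ℝᵐ is G-invariant (X is a union of orbits z₁^G,…,z_e^G with weight constant on each orbit). If ∑_{x∈X} w(x) f(x) = ∫_Ω f dμ holds for every G-invariant polynomial f of degree ≤ t (with Ω, μ invariant under G ≤ O(m)), then the same equality holds for every polynomial of degree ≤ t. -/

import Mathlib

open Finset MeasureTheory MvPolynomial

namespace SobolevAux

variable {m : ℕ}

lemma eval_eq_aeval (v : Fin m → ℝ) (p : MvPolynomial (Fin m) ℝ) :
    eval v p = aeval v p := rfl

lemma totalDegree_bind₁_le {σ τ : Type*} (φ : σ → MvPolynomial τ ℝ)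
    (h : ∀ j, (φ j).totalDegree ≤ 1) (f : MvPolynomial σ ℝ) :
    (bind₁ φ f).totalDegree ≤ f.totalDegree := by
  conv_lhs => rw [f.as_sum]
  rw [map_sum]
  apply totalDegree_finsetSum_le
  intro s hs
  rw [bind₁_monomial]
  refine (totalDegree_mul _ _).trans ?_
  simp only [totalDegree_C, zero_add]
  refine (totalDegree_finset_prod _ _).trans ?_
  refine le_trans ?_ (le_totalDegree hs)
  show _ ≤ s.sum fun _ e => e
  rw [Finsupp.sum]
  refine Finset.sum_le_sum fun i _ => ?_
  calc (φ i ^ s i).totalDegree ≤ s i * (φ i).totalDegree := totalDegree_pow _ _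
    _ ≤ s i * 1 := Nat.mul_le_mul_left _ (h i)
    _ = s i := Nat.mul_one _

noncomputable def lin (g : EuclideanSpace ℝ (Fin m) ≃ₗᵢ[ℝ] EuclideanSpace ℝ (Fin m)) :
    Fin m → MvPolynomial (Fin m) ℝ :=
  fun j => ∑ i, C (g (EuclideanSpace.single i 1) j) * X i

lemma lin_totalDegree (g : EuclideanSpace ℝ (Fin m) ≃ₗᵢ[ℝ] EuclideanSpace ℝ (Fin m))
    (j : Fin m) : (lin g j).totalDegree ≤ 1 := by
  apply totalDegree_finsetSum_le
  intro i _
  refine (totalDegree_mul _ _).trans ?_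
  simp [totalDegree_X]

lemma apply_eq_sum (g : EuclideanSpace ℝ (Fin m) ≃ₗᵢ[ℝ] EuclideanSpace ℝ (Fin m))
    (y : EuclideanSpace ℝ (Fin m)) (j : Fin m) :
    g y j = ∑ i, g (EuclideanSpace.single i 1) j * y i := by
  have hy : ∑ i, y i • EuclideanSpace.single i (1:ℝ) = y := by
    have := (EuclideanSpace.basisFun (Fin m) ℝ).sum_repr y
    simpa [EuclideanSpace.basisFun_apply, EuclideanSpace.basisFun_repr] using this
  conv_lhs => rw [← hy]
  rw [map_sum, WithLp.ofLp_sum, Finset.sum_apply]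
  simp [mul_comm]

lemma eval_bind_lin (g : EuclideanSpace ℝ (Fin m) ≃ₗᵢ[ℝ] EuclideanSpace ℝ (Fin m))
    (f : MvPolynomial (Fin m) ℝ) (y : EuclideanSpace ℝ (Fin m)) :
    eval (fun j => y j) (bind₁ (lin g) f) = eval (fun j => g y j) f := by
  rw [eval_eq_aeval, aeval_bind₁, eval_eq_aeval]
  have h : (fun i => aeval (R := ℝ) (fun j => y j) (lin g i)) = fun j => g y j := by
    funext j
    rw [apply_eq_sum g y j]
    simp [lin, ← eval_eq_aeval]
  rw [h]

end SobolevAux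

open SobolevAux

/-- The Sobolev theorem: a `G`-invariant weighted finite set which integrates
exactly all `G`-invariant polynomials of degree at most `t` against a
`G`-invariant measure integrates exactly all polynomials of degree at most `t`. -/
theorem sobolev_theorem (m t : ℕ)
    (G : Subgroup (EuclideanSpace ℝ (Fin m) ≃ₗᵢ[ℝ] EuclideanSpace ℝ (Fin m)))
    [Fintype G]
    (μ : Measure (EuclideanSpace ℝ (Fin m)))
    (hμinv : ∀ g : EuclideanSpace ℝ (Fin m) ≃ₗᵢ[ℝ] EuclideanSpace ℝ (Fin m),
      g ∈ G → μ.map g = μ)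
    (hInt : ∀ f : MvPolynomial (Fin m) ℝ, f.totalDegree ≤ t →
      Integrable (fun y : EuclideanSpace ℝ (Fin m) =>
        MvPolynomial.eval (fun j => y j) f) μ)
    (X : Finset (EuclideanSpace ℝ (Fin m))) (w : EuclideanSpace ℝ (Fin m) → ℝ)
    (hXinv : ∀ g ∈ G, ∀ x ∈ X,
      (g : EuclideanSpace ℝ (Fin m) ≃ₗᵢ[ℝ] EuclideanSpace ℝ (Fin m)) x ∈ X)
    (hwinv : ∀ g ∈ G, ∀ x ∈ X,
      w ((g : EuclideanSpace ℝ (Fin m) ≃ₗᵢ[ℝ] EuclideanSpace ℝ (Fin m)) x) = w x)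
    (hGcub : ∀ f : MvPolynomial (Fin m) ℝ, f.totalDegree ≤ t →
      (∀ g ∈ G, ∀ y : EuclideanSpace ℝ (Fin m),
        MvPolynomial.eval (fun j => g y j) f = MvPolynomial.eval (fun j => y j) f) →
      ∑ x ∈ X, w x * MvPolynomial.eval (fun j => x j) f =
        ∫ y, MvPolynomial.eval (fun j => y j) f ∂μ) :
    ∀ f : MvPolynomial (Fin m) ℝ, f.totalDegree ≤ t →
      ∑ x ∈ X, w x * MvPolynomial.eval (fun j => x j) f =
        ∫ y, MvPolynomial.eval (fun j => y j) f ∂μ := by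
  intro f hf
  classical
  set n : ℕ := Fintype.card G with hn
  have hn0 : (n : ℝ) ≠ 0 := Nat.cast_ne_zero.mpr Fintype.card_ne_zero
  -- the averaged polynomial
  set F : MvPolynomial (Fin m) ℝ :=
    C ((n : ℝ)⁻¹) * ∑ g : G, bind₁ (lin (g : EuclideanSpace ℝ (Fin m) ≃ₗᵢ[ℝ]
      EuclideanSpace ℝ (Fin m))) f with hF
  have hFdeg : F.totalDegree ≤ t := by
    refine (totalDegree_mul _ _).trans ?_
    simp only [totalDegree_C, zero_add]
    exact totalDegree_finsetSum_le fun g _ =>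
      (totalDegree_bind₁_le _ (lin_totalDegree _) f).trans hf
  have hFeval : ∀ y : EuclideanSpace ℝ (Fin m),
      eval (fun j => y j) F =
        (n : ℝ)⁻¹ * ∑ g : G, eval (fun j =>
          (g : EuclideanSpace ℝ (Fin m) ≃ₗᵢ[ℝ] EuclideanSpace ℝ (Fin m)) y j) f := by
    intro y
    rw [hF]
    simp [eval_bind_lin]
  -- invariance of the averaged polynomial
  have hFinv : ∀ g ∈ G, ∀ y : EuclideanSpace ℝ (Fin m),
      eval (fun j => g y j) F = eval (fun j => y j) F := by
    intro h hh y
    rw [hFeval, hFeval]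
    congr 1
    exact Fintype.sum_equiv (Equiv.mulRight (⟨h, hh⟩ : G)) _ _ (fun g => rfl)
  -- orbit invariance of the weighted sum
  have horb : ∀ g : G, ∑ x ∈ X, w x * eval (fun j =>
      (g : EuclideanSpace ℝ (Fin m) ≃ₗᵢ[ℝ] EuclideanSpace ℝ (Fin m)) x j) f =
      ∑ x ∈ X, w x * eval (fun j => x j) f := by
    intro g
    refine Finset.sum_nbij'
      (fun x => (g : EuclideanSpace ℝ (Fin m) ≃ₗᵢ[ℝ] EuclideanSpace ℝ (Fin m)) x)
      (fun x => ((g : EuclideanSpace ℝ (Fin m) ≃ₗᵢ[ℝ] EuclideanSpace ℝ (Fin m))).symm x)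
      (fun x hx => hXinv _ g.2 x hx) (fun x hx => ?_) (fun x _ => by simp)
      (fun x _ => by simp) (fun x hx => by rw [hwinv _ g.2 x hx])
    have := hXinv _ (inv_mem g.2 : (↑g⁻¹ : EuclideanSpace ℝ (Fin m) ≃ₗᵢ[ℝ]
      EuclideanSpace ℝ (Fin m)) ∈ G) x hx
    simpa using this
  -- integrability of each translated polynomial
  have hint : ∀ g : G, Integrable (fun y : EuclideanSpace ℝ (Fin m) => eval (fun j =>
      (g : EuclideanSpace ℝ (Fin m) ≃ₗᵢ[ℝ] EuclideanSpace ℝ (Fin m)) y j) f) μ := by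
    intro g
    have := hInt (bind₁ (lin (g : EuclideanSpace ℝ (Fin m) ≃ₗᵢ[ℝ]
      EuclideanSpace ℝ (Fin m))) f) ((totalDegree_bind₁_le _ (lin_totalDegree _) f).trans hf)
    simpa [eval_bind_lin] using this
  -- change of variables in the integral
  have key : ∀ g : G, ∫ y, eval (fun j =>
      (g : EuclideanSpace ℝ (Fin m) ≃ₗᵢ[ℝ] EuclideanSpace ℝ (Fin m)) y j) f ∂μ =
      ∫ y, eval (fun j => y j) f ∂μ := by
    intro g
    have h1 : μ.map (g : EuclideanSpace ℝ (Fin m) ≃ₗᵢ[ℝ] EuclideanSpace ℝ (Fin m)) = μ :=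
      hμinv _ g.2
    have hsm : AEStronglyMeasurable (fun z : EuclideanSpace ℝ (Fin m) =>
        eval (fun j => z j) f)
        (μ.map (g : EuclideanSpace ℝ (Fin m) ≃ₗᵢ[ℝ] EuclideanSpace ℝ (Fin m))) := by
      rw [h1]; exact (hInt f hf).aestronglyMeasurable
    have hgm : AEMeasurable (g : EuclideanSpace ℝ (Fin m) ≃ₗᵢ[ℝ]
        EuclideanSpace ℝ (Fin m)) μ :=
      ((g : EuclideanSpace ℝ (Fin m) ≃ₗᵢ[ℝ]
        EuclideanSpace ℝ (Fin m)).continuous.measurable).aemeasurable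
    rw [← MeasureTheory.integral_map hgm hsm, h1]
  -- the weighted sums agree
  have hL : ∑ x ∈ X, w x * eval (fun j => x j) F = ∑ x ∈ X, w x * eval (fun j => x j) f := by
    calc ∑ x ∈ X, w x * eval (fun j => x j) F
        = ∑ x ∈ X, (n : ℝ)⁻¹ * ∑ g : G, w x * eval (fun j =>
            (g : EuclideanSpace ℝ (Fin m) ≃ₗᵢ[ℝ] EuclideanSpace ℝ (Fin m)) x j) f := by
          refine Finset.sum_congr rfl fun x _ => ?_
          rw [hFeval, mul_left_comm, Finset.mul_sum]
      _ = (n : ℝ)⁻¹ * ∑ g : G, ∑ x ∈ X, w x * eval (fun j =>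
            (g : EuclideanSpace ℝ (Fin m) ≃ₗᵢ[ℝ] EuclideanSpace ℝ (Fin m)) x j) f := by
          rw [← Finset.mul_sum, Finset.sum_comm]
      _ = (n : ℝ)⁻¹ * ∑ _g : G, ∑ x ∈ X, w x * eval (fun j => x j) f := by
          rw [Finset.sum_congr rfl fun g _ => horb g]
      _ = ∑ x ∈ X, w x * eval (fun j => x j) f := by
          rw [Finset.sum_const, Finset.card_univ, ← hn, nsmul_eq_mul, ← mul_assoc,
            inv_mul_cancel₀ hn0, one_mul]
  -- the integrals agree
  have hR : ∫ y, eval (fun j => y j) F ∂μ = ∫ y, eval (fun j => y j) f ∂μ := by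
    calc ∫ y, eval (fun j => y j) F ∂μ
        = ∫ y, (n : ℝ)⁻¹ * ∑ g : G, eval (fun j =>
            (g : EuclideanSpace ℝ (Fin m) ≃ₗᵢ[ℝ] EuclideanSpace ℝ (Fin m)) y j) f ∂μ := by
          exact integral_congr_ae (Filter.Eventually.of_forall fun y => hFeval y)
      _ = (n : ℝ)⁻¹ * ∑ g : G, ∫ y, eval (fun j =>
            (g : EuclideanSpace ℝ (Fin m) ≃ₗᵢ[ℝ] EuclideanSpace ℝ (Fin m)) y j) f ∂μ := by
          rw [MeasureTheory.integral_const_mul, integral_finset_sum _ fun g _ => hint g]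
      _ = (n : ℝ)⁻¹ * ∑ _g : G, ∫ y, eval (fun j => y j) f ∂μ := by
          rw [Finset.sum_congr rfl fun g _ => key g]
      _ = ∫ y, eval (fun j => y j) f ∂μ := by
          rw [Finset.sum_const, Finset.card_univ, ← hn, nsmul_eq_mul, ← mul_assoc,
            inv_mul_cancel₀ hn0, one_mul]
  rw [← hL, ← hR]
  exact hGcub F hFdeg hFinv
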